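/- Let p be an odd prime, and let Y be an extraspecial subgroup of exponent p of a finite p-group Q with [Q,Y] = Z(Y) and Q = Ω₁(Q). Then Q = Y · Ω₁(C_Q(Y)), and C_Q(Y) = Ω₁(C_Q(Y)). -/

import Mathlib

/-- `G` is extraspecial for the prime `p`: its center has order `p` and `G/Z(G)`
is elementary abelian (nontrivial, abelian of exponent `p`). -/
def IsExtraspecial (p : ℕ) (G : Type*) [Group G] : Prop :=
  Nat.card (Subgroup.center G) = p ∧
  Nontrivial (G ⧸ Subgroup.center G) ∧
  (∀ a b : G ⧸ Subgroup.center G, a * b = b * a) ∧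
  (∀ a : G ⧸ Subgroup.center G, a ^ p = 1)

lemma aux_card_module {p : ℕ} [Fact p.Prime] (M : Type*) [AddCommGroup M]
    [Module (ZMod p) M] [Finite M] : Nat.card M = p ^ Module.finrank (ZMod p) M := by
  letI := Fintype.ofFinite M
  rw [Nat.card_eq_fintype_card, Module.card_eq_pow_finrank (K := ZMod p), ZMod.card]

/-- The number of homomorphisms from a finite group of exponent dividing `p` into a
group of order `p` equals the order of the group. -/
lemma aux_card_hom {p : ℕ} (hp : p.Prime) (V N : Type*) [CommGroup V] [CommGroup N]
    [Finite V] [Finite N] (hV : ∀ v : V, v ^ p = 1) (hN : Nat.card N = p) :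
    Nat.card (V →* N) = Nat.card V := by
  haveI : Fact p.Prime := ⟨hp⟩
  haveI : NeZero p := ⟨hp.ne_zero⟩
  haveI : Module (ZMod p) (Additive V) := AddCommGroup.zmodModule (by
    intro x
    exact Additive.toMul.injective (by simpa using hV x.toMul))
  haveI : Module (ZMod p) (Additive N) := AddCommGroup.zmodModule (by
    intro x
    refine Additive.toMul.injective ?_
    simpa using hN ▸ (pow_card_eq_one' (x := x.toMul)))
  have e1 : (V →* N) ≃ (Additive V →+ Additive N) := MonoidHom.toAdditive
  have e2 : (Additive V →+ Additive N) ≃ (Additive V →ₗ[ZMod p] Additive N) :=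
    { toFun := AddMonoidHom.toZModLinearMap p
      invFun := LinearMap.toAddMonoidHom
      left_inv := fun f => rfl
      right_inv := fun f => rfl }
  haveI : Finite (Additive V →ₗ[ZMod p] Additive N) := by
    refine Finite.of_injective (fun f => (f : Additive V → Additive N)) ?_
    intro f g h
    exact LinearMap.ext fun x => congrFun h x
  have hfN : Module.finrank (ZMod p) (Additive N) = 1 := by
    have h1 := aux_card_module (p := p) (Additive N)
    rw [Nat.card_congr (Additive.toMul (α := N)), hN] at h1
    refine Nat.pow_right_injective hp.two_le ?_
    show p ^ _ = p ^ 1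
    rw [pow_one, ← h1]
  haveI : SMulCommClass (ZMod p) (ZMod p) (Additive N) := smulCommClass_self _ _
  have h2 : Nat.card (Additive V →ₗ[ZMod p] Additive N)
      = p ^ Module.finrank (ZMod p) (Additive V →ₗ[ZMod p] Additive N) :=
    aux_card_module (p := p) (Additive V →ₗ[ZMod p] Additive N)
  have h3 : Module.finrank (ZMod p) (Additive V →ₗ[ZMod p] Additive N)
      = Module.finrank (ZMod p) (Additive V) * Module.finrank (ZMod p) (Additive N) :=
    Module.finrank_linearMap (R := ZMod p) (S := ZMod p) (M := Additive V) (N := Additive N)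
  rw [Nat.card_congr (e1.trans e2), h2, h3, hfN, mul_one,
    ← aux_card_module (p := p) (Additive V), Nat.card_congr (Additive.toMul (α := V))]

open scoped commutatorElement

/-- Let `p` be an odd prime, `Q` a finite `p`-group with `Q = Ω₁(Q)`, and
`Y ≤ Q` extraspecial of exponent `p` with `[Q,Y] = Z(Y)`. Then
`Q = Y · Ω₁(C_Q(Y))` and `C_Q(Y) = Ω₁(C_Q(Y))`. -/
theorem stmt_14 {p : ℕ} (hp : p.Prime) (hodd : Odd p)
    {Q : Type*} [Group Q] [Finite Q] (hQ : IsPGroup p Q)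
    (hgen : Subgroup.closure {x : Q | x ^ p = 1} = ⊤)
    (Y : Subgroup Q) (hY : IsExtraspecial p Y)
    (hYexp : ∀ y ∈ Y, y ^ p = 1)
    (hcomm : ⁅(⊤ : Subgroup Q), Y⁆ = Y ⊓ Subgroup.centralizer (Y : Set Q)) :
    (∀ g : Q, ∃ y ∈ Y,
        ∃ c ∈ Subgroup.closure
            {x : Q | x ∈ Subgroup.centralizer (Y : Set Q) ∧ x ^ p = 1},
          g = y * c) ∧
      Subgroup.centralizer (Y : Set Q) =
        Subgroup.closure
          {x : Q | x ∈ Subgroup.centralizer (Y : Set Q) ∧ x ^ p = 1} := by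
  classical
  haveI : Fact p.Prime := ⟨hp⟩
  set C := Subgroup.centralizer (Y : Set Q) with hCdef
  set R := Y ⊓ C with hRdef
  -- elements of C commute with elements of Y
  have hCY : ∀ c ∈ C, ∀ z ∈ Y, z * c = c * z := fun c hc z hz =>
    Subgroup.mem_centralizer_iff.mp hc z hz
  have hRY : ∀ r ∈ R, ∀ z ∈ Y, z * r = r * z := fun r hr => hCY r hr.2
  -- Y is normal
  have hYle : ⁅(⊤ : Subgroup Q), Y⁆ ≤ Y := hcomm.le.trans inf_le_left
  haveI hYnormal : Y.Normal := by
    constructor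
    intro n hn g
    have h1 : ⁅g, n⁆ ∈ Y := hYle (Subgroup.commutator_mem_commutator (Subgroup.mem_top g) hn)
    have h2 : g * n * g⁻¹ = ⁅g, n⁆ * n := by group
    rw [h2]; exact Y.mul_mem h1 hn
  haveI hRnormal : R.Normal := hcomm ▸ Subgroup.commutator_normal ⊤ Y
  -- R is the image of the center of Y
  have hmapcenter : (Subgroup.center ↥Y).map Y.subtype = R := by
    ext x
    constructor
    · rintro ⟨⟨y, hy⟩, hyc, rfl⟩
      refine ⟨hy, Subgroup.mem_centralizer_iff.mpr fun z hz => ?_⟩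
      have := Subgroup.mem_center_iff.mp hyc ⟨z, hz⟩
      simpa [Subtype.ext_iff] using this
    · rintro ⟨hxY, hxC⟩
      refine ⟨⟨x, hxY⟩, Subgroup.mem_center_iff.mpr fun z => ?_, rfl⟩
      exact Subtype.ext (hCY x hxC z z.2)
  have hcardR : Nat.card ↥R = p := by
    rw [← hmapcenter,
      Nat.card_congr ((Subgroup.center ↥Y).equivMapOfInjective Y.subtype
        Y.subtype_injective).toEquiv.symm]
    exact hY.1
  -- commutators of Q with Y lie in R
  have hmemR : ∀ (x z : Q), z ∈ Y → ⁅x, z⁆ ∈ R := fun x z hz =>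
    hcomm ▸ Subgroup.commutator_mem_commutator (Subgroup.mem_top x) hz
  -- Q centralizes R
  have hQR : ∀ (x r : Q), r ∈ R → x * r * x⁻¹ = r := by
    intro x r hr
    by_cases h1 : r = 1
    · simp [h1]
    have hordr : orderOf r = p := by
      have h2 : orderOf r ∣ p := hcardR ▸ R.orderOf_dvd_natCard hr
      rcases (Nat.Prime.eq_one_or_self_of_dvd hp _ h2) with h | h
      · exact absurd (orderOf_eq_one_iff.mp h) h1
      · exact h
    have hzp : Subgroup.zpowers r = R := by
      refine Subgroup.eq_of_le_of_card_ge ((Subgroup.zpowers_le).mpr hr) ?_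
      rw [hcardR, Nat.card_zpowers, hordr]
    obtain ⟨k, hk⟩ : ∃ k : ℤ, r ^ k = x * r * x⁻¹ := by
      have : x * r * x⁻¹ ∈ Subgroup.zpowers r := hzp ▸ hRnormal.conj_mem r hr x
      exact this
    have hiter : ∀ n : ℕ, x ^ n * r * (x ^ n)⁻¹ = r ^ (k ^ n) := by
      intro n
      induction n with
      | zero => simp
      | succ m ih =>
        have : x ^ (m + 1) * r * (x ^ (m + 1))⁻¹ = x * (x ^ m * r * (x ^ m)⁻¹) * x⁻¹ := by
          rw [pow_succ']; group
        rw [this, ih, ← conj_zpow, ← hk, ← zpow_mul, pow_succ, Int.mul_comm]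
    obtain ⟨a, ha⟩ := hQ x
    have h3 : r ^ (k ^ (p ^ a)) = r := by
      have := hiter (p ^ a)
      rw [ha] at this
      simpa using this.symm
    have h4 : ((k : ZMod p)) ^ (p ^ a) = 1 := by
      have h5 : ((orderOf r : ℤ)) ∣ k ^ (p ^ a) - 1 := by
        rw [orderOf_dvd_iff_zpow_eq_one, zpow_sub, zpow_one, h3, mul_inv_cancel]
      rw [hordr] at h5
      have h6 := (ZMod.intCast_zmod_eq_zero_iff_dvd _ p).mpr h5
      push_cast at h6
      linear_combination h6
    have h6 : (k : ZMod p) = 1 := by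
      rw [← ZMod.pow_card_pow (n := a) (x := (k : ZMod p)), h4]
    have h7 : (p : ℤ) ∣ k - 1 := by
      rw [← ZMod.intCast_zmod_eq_zero_iff_dvd]
      push_cast
      rw [h6]; ring
    obtain ⟨m, hm⟩ := h7
    have hrp : r ^ (p : ℤ) = 1 := by
      rw [zpow_natCast, ← hordr, pow_orderOf_eq_one]
    calc x * r * x⁻¹ = r ^ k := hk.symm
      _ = r ^ (1 + (p : ℤ) * m) := by rw [show k = 1 + (p : ℤ) * m by linarith]
      _ = r * (r ^ (p : ℤ)) ^ m := by rw [zpow_add, zpow_one, zpow_mul]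
      _ = r := by rw [hrp, one_zpow, mul_one]
  have hQRc : ∀ (x r : Q), r ∈ R → x * r = r * x := by
    intro x r hr
    have := hQR x r hr
    calc x * r = x * r * x⁻¹ * x := by group
      _ = r * x := by rw [this]
  -- R is commutative
  letI instR : CommGroup ↥R :=
    { (inferInstance : Group ↥R) with
      mul_comm := fun a b => Subtype.ext (hRY _ b.2 _ a.2.1) }
  -- the commutator homomorphisms
  let φ : Q → (↥Y →* ↥R) := fun x =>
    { toFun := fun z => ⟨⁅x, (z : Q)⁆, hmemR x z z.2⟩
      map_one' := by
        apply Subtype.ext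
        show ⁅x, ((1 : ↥Y) : Q)⁆ = 1
        simp
      map_mul' := by
        intro z w
        apply Subtype.ext
        show ⁅x, ((z : Q) * w)⁆ = ⁅x, (z : Q)⁆ * ⁅x, (w : Q)⁆
        have h1 : ⁅x, (z : Q) * w⁆ = ⁅x, (z : Q)⁆ * ((z : Q) * ⁅x, (w : Q)⁆ * (z : Q)⁻¹) := by
          group
        have h2 : (z : Q) * ⁅x, (w : Q)⁆ = ⁅x, (w : Q)⁆ * z := hRY _ (hmemR x w w.2) _ z.2
        rw [h1, h2, mul_inv_cancel_right] }
  let Φ : ↥Y →* (↥Y →* ↥R) :=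
    { toFun := fun y => φ (y : Q)
      map_one' := by
        ext z
        show ⁅((1 : ↥Y) : Q), (z : Q)⁆ = (1 : Q)
        simp
      map_mul' := by
        intro y y'
        ext z
        show ⁅(y : Q) * y', (z : Q)⁆ = ⁅(y : Q), (z : Q)⁆ * ⁅(y' : Q), (z : Q)⁆
        have h1 : ⁅(y : Q) * y', (z : Q)⁆
            = ((y : Q) * ⁅(y' : Q), (z : Q)⁆ * (y : Q)⁻¹) * ⁅(y : Q), (z : Q)⁆ := by group
        have h2 : (y : Q) * ⁅(y' : Q), (z : Q)⁆ = ⁅(y' : Q), (z : Q)⁆ * y :=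
          hRY _ (hmemR _ _ z.2) _ y.2
        have h3 : (⁅(y : Q), (z : Q)⁆ : Q) * ⁅(y' : Q), (z : Q)⁆
            = ⁅(y' : Q), (z : Q)⁆ * ⁅(y : Q), (z : Q)⁆ :=
          hRY _ (hmemR _ _ z.2) _ (hmemR _ _ z.2).1
        rw [h1, h2, mul_inv_cancel_right]
        exact h3.symm }
  have hkerΦ : Φ.ker = Subgroup.center ↥Y := by
    ext y
    rw [MonoidHom.mem_ker, Subgroup.mem_center_iff]
    constructor
    · intro h z
      have h1 : ⁅(y : Q), (z : Q)⁆ = 1 :=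
        congrArg (fun f : ↥Y →* ↥R => ((f z : ↥R) : Q)) h
      have h2 := commutatorElement_eq_one_iff_commute.mp h1
      exact Subtype.ext h2.eq.symm
    · intro h
      ext z
      show ⁅(y : Q), (z : Q)⁆ = (1 : Q)
      apply commutatorElement_eq_one_iff_commute.mpr
      have h2 : (z : Q) * y = (y : Q) * z := congrArg Subtype.val (h z)
      exact h2.symm
  -- the commutator subgroup of Y is its center
  have hnontriv := hY.2.1
  have habel := hY.2.2.1
  have hcommle : ⁅(⊤ : Subgroup ↥Y), (⊤ : Subgroup ↥Y)⁆ ≤ Subgroup.center ↥Y := by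
    rw [Subgroup.commutator_le]
    intro a _ b _
    have h1 : (QuotientGroup.mk ⁅a, b⁆ : ↥Y ⧸ Subgroup.center ↥Y) = 1 := by
      rw [show (QuotientGroup.mk ⁅a, b⁆ : ↥Y ⧸ Subgroup.center ↥Y)
          = ⁅(QuotientGroup.mk a : ↥Y ⧸ Subgroup.center ↥Y), QuotientGroup.mk b⁆ from
        map_commutatorElement (QuotientGroup.mk' _) a b]
      exact commutatorElement_eq_one_iff_commute.mpr (habel _ _)
    rwa [QuotientGroup.eq_one_iff] at h1
  have hcommY : ⁅(⊤ : Subgroup ↥Y), (⊤ : Subgroup ↥Y)⁆ = Subgroup.center ↥Y := by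
    rcases eq_or_ne ⁅(⊤ : Subgroup ↥Y), (⊤ : Subgroup ↥Y)⁆ ⊥ with hbot | hne
    · exfalso
      have hab : ∀ a b : ↥Y, a * b = b * a := by
        intro a b
        have h1 : ⁅a, b⁆ ∈ (⊥ : Subgroup ↥Y) :=
          hbot ▸ Subgroup.commutator_mem_commutator (Subgroup.mem_top a) (Subgroup.mem_top b)
        exact (commutatorElement_eq_one_iff_commute.mp (Subgroup.mem_bot.mp h1)).eq
      have hcen : Subgroup.center ↥Y = ⊤ := by
        ext y
        simp only [Subgroup.mem_center_iff, Subgroup.mem_top, iff_true]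
        intro g
        exact hab g y
      obtain ⟨u, v, huv⟩ := hnontriv
      apply huv
      obtain ⟨u', rfl⟩ := QuotientGroup.mk_surjective u
      obtain ⟨v', rfl⟩ := QuotientGroup.mk_surjective v
      apply (QuotientGroup.eq).mpr
      rw [hcen]
      exact Subgroup.mem_top _
    · refine le_antisymm hcommle ?_
      refine (Subgroup.eq_of_le_of_card_ge hcommle ?_).ge
      have hdvd : Nat.card ↥⁅(⊤ : Subgroup ↥Y), (⊤ : Subgroup ↥Y)⁆ ∣ p :=
        hY.1 ▸ Subgroup.card_dvd_of_le hcommle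
      rcases hp.eq_one_or_self_of_dvd _ hdvd with h1 | h1
      · exact absurd (Subgroup.eq_bot_of_card_le _ h1.le) hne
      · rw [hY.1, h1]
  -- commutative group structures
  letI instV : CommGroup (↥Y ⧸ Subgroup.center ↥Y) :=
    { (inferInstance : Group (↥Y ⧸ Subgroup.center ↥Y)) with mul_comm := habel }
  -- counting homomorphisms
  have hcardhom : Nat.card (↥Y →* ↥R) = Nat.card (↥Y ⧸ Subgroup.center ↥Y) := by
    have hbij : Function.Bijective
        (fun g : (↥Y ⧸ Subgroup.center ↥Y) →* ↥R => g.comp (QuotientGroup.mk' _)) := by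
      constructor
      · intro g₁ g₂ hgg
        ext q
        exact congrArg (fun f : ↥Y →* ↥R => ((f q : ↥R) : Q)) hgg
      · intro f
        have hkf : Subgroup.center ↥Y ≤ f.ker := by
          rw [← hcommY, Subgroup.commutator_le]
          intro a _ b _
          rw [MonoidHom.mem_ker, map_commutatorElement]
          exact commutatorElement_eq_one_iff_commute.mpr (mul_comm _ _)
        exact ⟨QuotientGroup.lift _ f hkf, MonoidHom.ext fun z => rfl⟩
    rw [← Nat.card_eq_of_bijective _ hbij]
    exact aux_card_hom hp _ _ hY.2.2.2 hcardR
  -- Φ is surjective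
  have hrange : ∀ x : Q, ∃ y : ↥Y, Φ y = φ x := by
    haveI : Finite (↥Y →* ↥R) :=
      Finite.of_injective (fun f => (f : ↥Y → ↥R)) DFunLike.coe_injective
    have htop : Φ.range = ⊤ := by
      apply Subgroup.eq_top_of_card_eq
      rw [← Nat.card_congr (QuotientGroup.quotientKerEquivRange Φ).toEquiv, hkerΦ, ← hcardhom]
    intro x
    have hx : φ x ∈ Φ.range := htop ▸ Subgroup.mem_top _
    exact hx
  -- every element of Q is (element of Y) * (element of C)
  have hA : ∀ x : Q, ∃ y ∈ Y, y⁻¹ * x ∈ C := by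
    intro x
    obtain ⟨y, hy⟩ := hrange x
    refine ⟨(y : Q), y.2, Subgroup.mem_centralizer_iff.mpr ?_⟩
    intro z hz
    have h1 : ⁅(y : Q), z⁆ = ⁅x, z⁆ :=
      congrArg (fun f : ↥Y →* ↥R => ((f ⟨z, hz⟩ : ↥R) : Q)) hy
    rw [commutatorElement_def, commutatorElement_def] at h1
    have h2 : (y : Q) * z * (y : Q)⁻¹ = x * z * x⁻¹ := mul_right_cancel h1
    calc z * ((y : Q)⁻¹ * x)
        = (y : Q)⁻¹ * ((y : Q) * z * (y : Q)⁻¹) * x := by group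
      _ = (y : Q)⁻¹ * (x * z * x⁻¹) * x := by rw [h2]
      _ = ((y : Q)⁻¹ * x) * z := by group
  -- final assembly
  set K := Subgroup.closure {x : Q | x ∈ C ∧ x ^ p = 1} with hKdef
  have hKC : K ≤ C := (Subgroup.closure_le _).mpr fun x hx => hx.1
  have hgen2 : ∀ x : Q, x ^ p = 1 → x ∈ Y ⊔ K := by
    intro x hx
    obtain ⟨y, hyY, hc⟩ := hA x
    have hyc : y * (y⁻¹ * x) = (y⁻¹ * x) * y := hCY _ hc y hyY
    have hcp : (y⁻¹ * x) ^ p = 1 := by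
      have hcm : Commute y (y⁻¹ * x) := hyc
      have h1 : (y * (y⁻¹ * x)) ^ p = y ^ p * (y⁻¹ * x) ^ p := hcm.mul_pow p
      rw [show y * (y⁻¹ * x) = x by group, hx, hYexp y hyY, one_mul] at h1
      exact h1.symm
    have hxe : x = y * (y⁻¹ * x) := by group
    rw [hxe]
    exact Subgroup.mul_mem _ (Subgroup.mem_sup_left hyY)
      (Subgroup.mem_sup_right (Subgroup.subset_closure ⟨hc, hcp⟩))
  have htop2 : Y ⊔ K = ⊤ := by
    rw [eq_top_iff, ← hgen]
    exact (Subgroup.closure_le _).mpr fun x hx => hgen2 x hx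
  constructor
  · intro g
    have hg : g ∈ (Y ⊔ K : Subgroup Q) := htop2 ▸ Subgroup.mem_top g
    rw [← SetLike.mem_coe, Subgroup.normal_mul] at hg
    obtain ⟨y, hy, c, hc, hyc⟩ := hg
    exact ⟨y, hy, c, hc, hyc.symm⟩
  · refine le_antisymm ?_ hKC
    intro c hc
    have hcm : c ∈ (Y ⊔ K : Subgroup Q) := htop2 ▸ Subgroup.mem_top c
    rw [← SetLike.mem_coe, Subgroup.normal_mul] at hcm
    obtain ⟨y, hy, k, hk, hyk⟩ := hcm
    have hyC : y ∈ C := by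
      have hyeq : y = c * k⁻¹ := by rw [← hyk]; group
      rw [hyeq]
      exact C.mul_mem hc (C.inv_mem (hKC hk))
    have hyK : y ∈ K := Subgroup.subset_closure ⟨hyC, hYexp y hy⟩
    rw [← hyk]
    exact K.mul_mem hyK hk
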